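/- arXiv:2106.13330 — 4 statements merged into one kernel-verified Lean document; each statement's English description precedes it below -/
import Mathlib

section
/- If G is a finite bipartite simple graph in which every vertex has degree at most d, then there is a set E₀ of edges of G such that every vertex of G is an endpoint of at most one edge of E₀, and every vertex of degree exactly d is an endpoint of exactly one edge of E₀. -/
open Finset in
/-- Hall-type lemma: if every vertex of `S` has degree exactly `d` and all degrees
are at most `d`, there is an injective-on-`S` choice of neighbors. -/
lemma exists_injOn_adj' {V : Type*} [Fintype V]
    (G : SimpleGraph V) [DecidableRel G.Adj] (d : ℕ) (hd : 1 ≤ d)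
    (hdeg : ∀ v, G.degree v ≤ d) (S : Set V) (hS : ∀ v ∈ S, G.degree v = d) :
    ∃ f : V → V, Set.InjOn f S ∧ ∀ v ∈ S, G.Adj v (f v) := by
  classical
  have key : ∀ s : Finset S, #s ≤ #(s.biUnion (fun a => G.neighborFinset a.1)) := by
    intro s
    set t := s.biUnion (fun a => G.neighborFinset a.1) with ht
    have hsub : ∀ a ∈ s, G.neighborFinset a.1 ⊆ t := fun a ha =>
      Finset.subset_biUnion_of_mem (fun a : S => G.neighborFinset a.1) ha
    have h1 : #s * d = ∑ a ∈ s, (G.neighborFinset a.1).card := by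
      rw [Finset.sum_congr rfl (fun a _ => ?_), Finset.sum_const, smul_eq_mul]
      rw [SimpleGraph.card_neighborFinset_eq_degree, hS a.1 a.2]
    have h2 : ∀ a ∈ s, (G.neighborFinset a.1).card
        = ∑ b ∈ t, (if b ∈ G.neighborFinset a.1 then 1 else 0) := by
      intro a ha
      rw [← Finset.card_filter, Finset.filter_mem_eq_inter,
        Finset.inter_eq_right.mpr (hsub a ha)]
    have h3 : (∑ a ∈ s, (G.neighborFinset a.1).card)
        = ∑ b ∈ t, ∑ a ∈ s, (if b ∈ G.neighborFinset a.1 then 1 else 0) := by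
      rw [Finset.sum_congr rfl h2, Finset.sum_comm]
    have h4 : ∀ b ∈ t, (∑ a ∈ s, (if b ∈ G.neighborFinset a.1 then 1 else 0)) ≤ d := by
      intro b _
      rw [← Finset.card_filter]
      calc #(s.filter (fun a : S => b ∈ G.neighborFinset a.1)) ≤ #(G.neighborFinset b) := by
            apply Finset.card_le_card_of_injOn (fun a => a.1)
            · intro a ha
              simp only [Finset.coe_filter, Finset.mem_coe, Set.mem_setOf_eq, Finset.mem_filter, SimpleGraph.mem_neighborFinset] at ha ⊢
              exact ha.2.symm
            · intro x _ y _ hxy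
              exact Subtype.ext hxy
        _ ≤ d := by rw [SimpleGraph.card_neighborFinset_eq_degree]; exact hdeg b
    have h5 : #s * d ≤ #t * d := by
      rw [h1, h3]
      calc (∑ b ∈ t, ∑ a ∈ s, (if b ∈ G.neighborFinset a.1 then 1 else 0))
          ≤ ∑ _b ∈ t, d := Finset.sum_le_sum h4
        _ = #t * d := by rw [Finset.sum_const, smul_eq_mul]
    exact Nat.le_of_mul_le_mul_right h5 hd
  obtain ⟨f, hfinj, hfmem⟩ :=
    (Finset.all_card_le_biUnion_card_iff_exists_injective
      (fun a : S => G.neighborFinset a.1)).mp key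
  refine ⟨fun v => if h : v ∈ S then f ⟨v, h⟩ else v, ?_, ?_⟩
  · intro x hx y hy hxy
    simp only [dif_pos hx, dif_pos hy] at hxy
    exact congrArg Subtype.val (hfinj hxy)
  · intro v hv
    simp only [dif_pos hv]
    exact (SimpleGraph.mem_neighborFinset _ _ _).mp (hfmem ⟨v, hv⟩)

/-- Auxiliary inductive set for combining two one-sided matchings
(Mendelsohn–Dulmage style alternating chains). -/
inductive MDChain {V : Type*} (SA SB : Set V) (g h : V → V) : V → Prop
  | base (b : V) : b ∈ SB → (∀ a ∈ SA, g a ≠ b) → MDChain SA SB g h b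
  | step (b : V) : MDChain SA SB g h b → b ∈ SB → h b ∈ SA → MDChain SA SB g h (g (h b))

/-- In a finite bipartite simple graph with all degrees at most `d`, there is a
set of edges such that every vertex is an endpoint of at most one of them and
every vertex of degree exactly `d` is an endpoint of exactly one of them. -/
theorem bipartite_partial_matching {V : Type*} [Fintype V]
    (G : SimpleGraph V) [DecidableRel G.Adj] (d : ℕ) (hd : 1 ≤ d)
    (A : Set V) (hbip : ∀ u v, G.Adj u v → (u ∈ A ↔ v ∉ A))
    (hdeg : ∀ v, G.degree v ≤ d) :
    ∃ M : G.Subgraph, M.IsMatching ∧ ∀ v, G.degree v = d → v ∈ M.verts := by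
  classical
  set SA : Set V := {v | v ∈ A ∧ G.degree v = d} with hSA
  set SB : Set V := {v | v ∉ A ∧ G.degree v = d} with hSB
  obtain ⟨g, gInj, gAdj⟩ := exists_injOn_adj' G d hd hdeg SA (fun v hv => hv.2)
  obtain ⟨h, hInj, hAdj⟩ := exists_injOn_adj' G d hd hdeg SB (fun v hv => hv.2)
  -- side facts
  have gB : ∀ a ∈ SA, g a ∉ A := fun a ha => (hbip a (g a) (gAdj a ha)).mp ha.1
  have hA : ∀ b ∈ SB, h b ∈ A := by
    intro b hb
    by_contra hc
    exact hb.1 ((hbip b (h b) (hAdj b hb)).mpr hc)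
  set C : V → Prop := MDChain SA SB g h with hC
  -- the key inversion lemma
  have K4 : ∀ a ∈ SA, C (g a) → ∃ b, b ∈ SB ∧ C b ∧ h b = a := by
    intro a ha hCga
    rw [hC] at hCga
    generalize hx : g a = x at hCga
    induction hCga with
    | base b hb hnb => exact absurd hx (hnb a ha)
    | step b hb hbB hbA _ => exact ⟨b, hbB, hb, gInj hbA ha hx.symm⟩
  -- the matching relation
  set Rel : V → V → Prop := fun u v =>
    (∃ b, b ∈ SB ∧ C b ∧ ((u = h b ∧ v = b) ∨ (v = h b ∧ u = b))) ∨
    (∃ a, a ∈ SA ∧ ¬ C (g a) ∧ ((u = a ∧ v = g a) ∨ (v = a ∧ u = g a))) with hRel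
  have RelAdj : ∀ u v, Rel u v → G.Adj u v := by
    intro u v huv
    rcases huv with ⟨b, hbB, -, ⟨hu, hv⟩ | ⟨hv, hu⟩⟩ | ⟨a, haA, -, ⟨hu, hv⟩ | ⟨hv, hu⟩⟩
    · rw [hu, hv]; exact (hAdj b hbB).symm
    · rw [hu, hv]; exact hAdj b hbB
    · rw [hu, hv]; exact gAdj a haA
    · rw [hu, hv]; exact (gAdj a haA).symm
  have RelSymm : ∀ u v, Rel u v → Rel v u := by
    intro u v huv
    rcases huv with ⟨b, h1, h2, h3 | h3⟩ | ⟨a, h1, h2, h3 | h3⟩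
    · exact Or.inl ⟨b, h1, h2, Or.inr ⟨h3.1, h3.2⟩⟩
    · exact Or.inl ⟨b, h1, h2, Or.inl ⟨h3.1, h3.2⟩⟩
    · exact Or.inr ⟨a, h1, h2, Or.inr ⟨h3.1, h3.2⟩⟩
    · exact Or.inr ⟨a, h1, h2, Or.inl ⟨h3.1, h3.2⟩⟩
  -- uniqueness of partner
  have uniq : ∀ v w w', Rel v w → Rel v w' → w = w' := by
    intro v w w' h1 h2
    rcases h1 with ⟨b, hbB, hbC, ⟨hv, hw⟩ | ⟨hw, hv⟩⟩ | ⟨a, haA, haC, ⟨hv, hw⟩ | ⟨hw, hv⟩⟩ <;>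
      rcases h2 with ⟨b', hbB', hbC', ⟨hv', hw'⟩ | ⟨hw', hv'⟩⟩ |
        ⟨a', haA', haC', ⟨hv', hw'⟩ | ⟨hw', hv'⟩⟩
    -- case v = h b, w = b
    · -- v = h b', w' = b'
      have : b = b' := hInj hbB hbB' (by rw [← hv, hv'])
      rw [hw, hw', this]
    · -- v = b' ∈ SB : contradiction, v ∈ A and v ∉ A
      have e1 : v ∈ A := by rw [hv]; exact hA b hbB
      have e2 : v ∉ A := by rw [hv']; exact hbB'.1
      exact absurd e1 e2
    · -- v = a' : then C (g a') should hold
      have hba : h b = a' := by rw [← hv, hv']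
      have : C (g a') := by
        rw [← hba]
        exact MDChain.step b hbC hbB (by rw [hba]; exact haA')
      exact absurd this haC'
    · have e1 : v ∈ A := by rw [hv]; exact hA b hbB
      have e2 : v ∉ A := by rw [hv']; exact gB a' haA'
      exact absurd e1 e2
    -- case v = b, w = h b
    · have e1 : v ∈ A := by rw [hv']; exact hA b' hbB'
      have e2 : v ∉ A := by rw [hv]; exact hbB.1
      exact absurd e1 e2
    · have : b = b' := by rw [← hv, hv']
      rw [hw, hw', this]
    · have e1 : v ∈ A := by rw [hv']; exact haA'.1
      have e2 : v ∉ A := by rw [hv]; exact hbB.1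
      exact absurd e1 e2
    · have e : b = g a' := by rw [← hv, hv']
      exact absurd (e ▸ hbC) haC'
    -- case v = a, w = g a
    · have hba : h b' = a := by rw [← hv', hv]
      have : C (g a) := by
        rw [← hba]
        exact MDChain.step b' hbC' hbB' (by rw [hba]; exact haA)
      exact absurd this haC
    · have e1 : v ∈ A := by rw [hv]; exact haA.1
      have e2 : v ∉ A := by rw [hv']; exact hbB'.1
      exact absurd e1 e2
    · have : a = a' := by rw [← hv, hv']
      rw [hw, hw', this]
    · have e1 : v ∈ A := by rw [hv]; exact haA.1
      have e2 : v ∉ A := by rw [hv']; exact gB a' haA'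
      exact absurd e1 e2
    -- case v = g a, w = a
    · have e1 : v ∈ A := by rw [hv']; exact hA b' hbB'
      have e2 : v ∉ A := by rw [hv]; exact gB a haA
      exact absurd e1 e2
    · have e : b' = g a := by rw [← hv', hv]
      exact absurd (e ▸ hbC') haC
    · have e1 : v ∈ A := by rw [hv']; exact haA'.1
      have e2 : v ∉ A := by rw [hv]; exact gB a haA
      exact absurd e1 e2
    · have : a = a' := gInj haA haA' (by rw [← hv, hv'])
      rw [hw, hw', this]
  -- coverage
  have cover : ∀ v, G.degree v = d → ∃ w, Rel v w := by
    intro v hv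
    by_cases hvA : v ∈ A
    · have hvSA : v ∈ SA := ⟨hvA, hv⟩
      by_cases hc : C (g v)
      · obtain ⟨b, hbB, hbC, hhb⟩ := K4 v hvSA hc
        exact ⟨b, Or.inl ⟨b, hbB, hbC, Or.inl ⟨hhb.symm, rfl⟩⟩⟩
      · exact ⟨g v, Or.inr ⟨v, hvSA, hc, Or.inl ⟨rfl, rfl⟩⟩⟩
    · have hvSB : v ∈ SB := ⟨hvA, hv⟩
      by_cases hc : C v
      · exact ⟨h v, Or.inl ⟨v, hvSB, hc, Or.inr ⟨rfl, rfl⟩⟩⟩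
      · have : ¬ ∀ a ∈ SA, g a ≠ v := fun hall => hc (MDChain.base v hvSB hall)
        push_neg at this
        obtain ⟨a, haA, hga⟩ := this
        exact ⟨a, Or.inr ⟨a, haA, (by rw [hga]; exact hc), Or.inr ⟨rfl, hga.symm⟩⟩⟩
  refine ⟨⟨{v | ∃ w, Rel v w}, Rel, fun {u v} huv => RelAdj u v huv,
    fun {u v} huv => ⟨v, huv⟩, ⟨fun u v huv => RelSymm u v huv⟩⟩, ?_, ?_⟩
  · intro v hv
    obtain ⟨w, hw⟩ := hv
    exact ⟨w, hw, fun w' hw' => uniq v w' w hw' hw⟩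
  · intro v hv
    exact cover v hv
end

section
/- Every finite bipartite simple graph with maximum degree at most d is an induced subgraph of some finite d-regular bipartite simple graph. -/
section Helper

variable {V : Type*} [Fintype V]

private def rAdj (G : SimpleGraph V) [DecidableRel G.Adj] (d : ℕ)
    (p q : V × ZMod (d+1) × Bool) : Prop :=
  (p.2.2 = q.2.2 ∧ p.2.1 = q.2.1 ∧ G.Adj p.1 q.1) ∨
  (p.1 = q.1 ∧ p.2.2 = false ∧ q.2.2 = true ∧ (q.2.1 - p.2.1).val < d - G.degree p.1) ∨
  (p.1 = q.1 ∧ p.2.2 = true ∧ q.2.2 = false ∧ (p.2.1 - q.2.1).val < d - G.degree p.1)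

private def rGraph (G : SimpleGraph V) [DecidableRel G.Adj] (d : ℕ) :
    SimpleGraph (V × ZMod (d+1) × Bool) where
  Adj := rAdj G d
  symm := by
    constructor
    rintro p q (⟨h1, h2, h3⟩ | ⟨h1, h2, h3, h4⟩ | ⟨h1, h2, h3, h4⟩)
    · exact Or.inl ⟨h1.symm, h2.symm, h3.symm⟩
    · exact Or.inr (Or.inr ⟨h1.symm, h3, h2, by rw [← h1]; exact h4⟩)
    · exact Or.inr (Or.inl ⟨h1.symm, h3, h2, by rw [← h1]; exact h4⟩)
  loopless := by
    constructor
    rintro p (⟨_, _, h⟩ | ⟨_, h2, h3, _⟩ | ⟨_, h2, h3, _⟩)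
    · exact G.loopless.irrefl _ h
    · simp [h2] at h3
    · simp [h2] at h3

private lemma zmod_card_lt (d k : ℕ) (hk : k ≤ d + 1) (e : ZMod (d+1) ≃ ZMod (d+1)) :
    Fintype.card {j : ZMod (d+1) // (e j).val < k} = k := by
  have e1 : {j : ZMod (d+1) // (e j).val < k} ≃ {j : ZMod (d+1) // j.val < k} :=
    e.subtypeEquiv (fun j => Iff.rfl)
  have e2 : {j : ZMod (d+1) // j.val < k} ≃ Fin k :=
    { toFun := fun j => ⟨j.1.val, j.2⟩
      invFun := fun m => ⟨(m.1 : ZMod (d+1)),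
        by rw [ZMod.val_cast_of_lt (lt_of_lt_of_le m.2 hk)]; exact m.2⟩
      left_inv := fun j => Subtype.ext (ZMod.natCast_rightInverse j.1)
      right_inv := fun m => Fin.ext (ZMod.val_cast_of_lt (lt_of_lt_of_le m.2 hk)) }
  rw [Fintype.card_congr (e1.trans e2), Fintype.card_fin]

private lemma rGraph_card (G : SimpleGraph V) [DecidableRel G.Adj] (d : ℕ)
    (hdeg : ∀ v, G.degree v ≤ d) (x : V × ZMod (d+1) × Bool)
    [Fintype ((rGraph G d).neighborSet x)] :
    Fintype.card ((rGraph G d).neighborSet x) = d := by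
  classical
  obtain ⟨v, i, b⟩ := x
  set k := d - G.degree v with hk
  have hiff : ∀ q : V × ZMod (d+1) × Bool,
      q ∈ (rGraph G d).neighborSet (v, i, b) ↔
        ((b = q.2.2 ∧ i = q.2.1 ∧ G.Adj v q.1) ∨
          (v = q.1 ∧ q.2.2 = !b ∧ ((if b then i - q.2.1 else q.2.1 - i).val < k))) := by
    rintro ⟨u, j, c⟩
    cases b <;> cases c <;>
      simp [SimpleGraph.mem_neighborSet, rGraph, rAdj, hk]
  rw [Fintype.card_congr (Equiv.subtypeEquivRight hiff)]
  rw [Fintype.card_subtype_or_disjoint _ _ (by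
    rintro p hp1 hp2 q hq
    have h1 := hp1 q hq
    have h2 := hp2 q hq
    exact absurd ((h1.1).trans (h2.2.1)) (by cases b <;> simp))]
  have eP : {q : V × ZMod (d+1) × Bool // b = q.2.2 ∧ i = q.2.1 ∧ G.Adj v q.1} ≃
      {u // G.Adj v u} :=
    { toFun := fun q => ⟨q.1.1, q.2.2.2⟩
      invFun := fun u => ⟨(u.1, i, b), rfl, rfl, u.2⟩
      left_inv := by
        rintro ⟨⟨u, j, c⟩, h1, h2, h3⟩
        have h1' : b = c := h1
        have h2' : i = j := h2
        subst h1'; subst h2'; rfl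
      right_inv := fun u => rfl }
  have eQ : {q : V × ZMod (d+1) × Bool //
        v = q.1 ∧ q.2.2 = !b ∧ ((if b then i - q.2.1 else q.2.1 - i).val < k)} ≃
      {j : ZMod (d+1) // (if b then i - j else j - i).val < k} :=
    { toFun := fun q => ⟨q.1.2.1, q.2.2.2⟩
      invFun := fun j => ⟨(v, j.1, !b), rfl, rfl, j.2⟩
      left_inv := by
        rintro ⟨⟨u, j, c⟩, h1, h2, h3⟩
        have h1' : v = u := h1
        have h2' : c = !b := h2
        subst h1'; subst h2'; rfl
      right_inv := fun j => rfl }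
  rw [Fintype.card_congr eP, Fintype.card_congr eQ]
  have h1 : Fintype.card {u // G.Adj v u} = G.degree v := by
    rw [Fintype.card_congr (Equiv.subtypeEquivRight (fun u => Iff.rfl) :
      {u // G.Adj v u} ≃ G.neighborSet v), SimpleGraph.card_neighborSet_eq_degree]
  have h2 : Fintype.card {j : ZMod (d+1) // (if b then i - j else j - i).val < k} = k := by
    have hkle : k ≤ d + 1 := le_trans (Nat.sub_le _ _) (Nat.le_succ d)
    cases b
    · simpa using zmod_card_lt d k hkle (Equiv.subRight i)
    · simpa using zmod_card_lt d k hkle (Equiv.subLeft i)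
  rw [h1, h2, hk, Nat.add_sub_cancel' (hdeg v)]

end Helper

/-- Every finite bipartite simple graph with maximum degree at most `d` is an
induced subgraph of a finite `d`-regular bipartite simple graph. -/
theorem bipartite_embeds_in_regular {V : Type*} [Fintype V]
    (G : SimpleGraph V) [DecidableRel G.Adj] (d : ℕ)
    (A : Set V) (hbip : ∀ u v, G.Adj u v → (u ∈ A ↔ v ∉ A))
    (hdeg : ∀ v, G.degree v ≤ d) :
    ∃ (W : Type) (_ : Fintype W) (H : SimpleGraph W) (_ : DecidableRel H.Adj)
      (B : Set W),
      H.IsRegularOfDegree d ∧ (∀ u v, H.Adj u v → (u ∈ B ↔ v ∉ B)) ∧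
        Nonempty (G ↪g H) := by
  classical
  set W₀ := V × ZMod (d+1) × Bool with hW₀
  set H₀ := rGraph G d with hH₀
  -- transfer to a `Type 0` vertex type
  set f : W₀ ≃ Fin (Fintype.card W₀) := Fintype.equivFin W₀ with hf
  refine ⟨Fin (Fintype.card W₀), inferInstance,
    H₀.comap (f.symm : Fin (Fintype.card W₀) → W₀), Classical.decRel _,
    {w | (f.symm w).1 ∈ A ↔ (f.symm w).2.2 = false}, ?_, ?_, ?_⟩
  · -- regularity
    intro w
    rw [← SimpleGraph.card_neighborSet_eq_degree]
    have e : (H₀.comap (f.symm : Fin (Fintype.card W₀) → W₀)).neighborSet w ≃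
        H₀.neighborSet (f.symm w) :=
      (f.symm : Fin (Fintype.card W₀) ≃ W₀).subtypeEquiv (fun q => Iff.rfl)
    rw [Fintype.card_eq_nat_card, Nat.card_congr e, ← Fintype.card_eq_nat_card]
    exact rGraph_card G d hdeg (f.symm w)
  · -- bipartite
    intro u w hadj
    simp only [Set.mem_setOf_eq]
    obtain ⟨h1, h2, h3⟩ | ⟨h1, h2, h3, h4⟩ | ⟨h1, h2, h3, h4⟩ := hadj
    · have := hbip _ _ h3
      rw [h1]
      tauto
    · rw [h1, h2, h3]
      simp
    · rw [h1, h2, h3]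
      simp
  · -- embedding
    refine ⟨⟨⟨fun v => f (v, 0, false), ?_⟩, ?_⟩⟩
    · intro u v huv
      have : ((u, (0 : ZMod (d+1)), false) : W₀) = (v, 0, false) := f.injective huv
      exact congrArg Prod.fst this
    · intro u v
      change (H₀.comap (f.symm : Fin (Fintype.card W₀) → W₀)).Adj (f (u, 0, false)) (f (v, 0, false)) ↔ G.Adj u v
      simp only [SimpleGraph.comap_adj, Function.Embedding.coeFn_mk, Equiv.symm_apply_apply]
      constructor
      · rintro (⟨-, -, h⟩ | ⟨-, -, h, -⟩ | ⟨-, h, -, -⟩)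
        · exact h
        · exact absurd h (by simp)
        · exact absurd h (by simp)
      · intro h
        exact Or.inl ⟨rfl, rfl, h⟩
end

section
/- If every finite subset S of the vertex set of a countable, locally finite, bipartite d-regular graph G admits a matching covering all vertices in S (i.e., a set of pairwise non-adjacent edges such that every vertex of S is an endpoint of one of them), then G admits a perfect matching. -/
/-- Compactness for matchings: if every finite set of vertices of a countable,
locally finite, `d`-regular graph with no odd cycles can be covered by a
matching, then the graph has a perfect matching. -/
theorem matching_compactness {V : Type*} [Countable V]
    (G : SimpleGraph V) [G.LocallyFinite] (d : ℕ) (hd : 1 ≤ d)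
    (hreg : G.IsRegularOfDegree d)
    (hbip : ¬ ∃ (v : V) (w : G.Walk v v), w.IsCycle ∧ Odd w.length)
    (hfin : ∀ s : Finset V, ∃ M : G.Subgraph, M.IsMatching ∧ ∀ v ∈ s, v ∈ M.verts) :
    ∃ M : G.Subgraph, M.IsPerfectMatching := by
  classical
  -- every vertex has a neighbor
  have hne : ∀ v : V, (G.neighborSet v).Nonempty := by
    intro v
    have h1 : 0 < (G.neighborFinset v).card := by
      rw [G.card_neighborFinset_eq_degree, hreg v]; omega
    obtain ⟨w, hw⟩ := Finset.card_pos.mp h1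
    exact ⟨w, by simpa using hw⟩
  haveI : ∀ v : V, Nonempty (G.neighborSet v) := fun v => (hne v).to_subtype
  -- the compact space of neighbor-choice functions
  letI : ∀ v : V, TopologicalSpace (G.neighborSet v) := fun _ => ⊥
  haveI : ∀ v : V, DiscreteTopology (G.neighborSet v) := fun _ => ⟨rfl⟩
  haveI : ∀ v : V, Finite (G.neighborSet v) := fun v => Finite.of_fintype _
  set X := ∀ v : V, G.neighborSet v with hX
  let C : Finset V → Set X := fun s =>
    { f | ∀ v ∈ s, ((f ((f v : V)) : V) = v) }
  have hdir : Directed (· ⊇ ·) C := by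
    intro s t
    exact ⟨s ∪ t, fun f hf v hv => hf v (Finset.mem_union_left _ hv),
      fun f hf v hv => hf v (Finset.mem_union_right _ hv)⟩
  have hCne : ∀ s, (C s).Nonempty := by
    intro s
    obtain ⟨M, hM, hMs⟩ := hfin s
    let f : X := fun v =>
      if h : v ∈ M.verts then
        ⟨(hM h).exists.choose, (M.adj_sub (hM h).exists.choose_spec)⟩
      else ⟨(hne v).choose, (hne v).choose_spec⟩
    refine ⟨f, fun v hv => ?_⟩
    have hvM : v ∈ M.verts := hMs v hv
    have hfv : f v = ⟨(hM hvM).exists.choose, (M.adj_sub (hM hvM).exists.choose_spec)⟩ := by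
      simp only [f, dif_pos hvM]
    set w : V := (hM hvM).exists.choose with hw
    have hadjw : M.Adj v w := (hM hvM).exists.choose_spec
    have hwM : w ∈ M.verts := M.edge_vert hadjw.symm
    have hfw : f w = ⟨(hM hwM).exists.choose, (M.adj_sub (hM hwM).exists.choose_spec)⟩ := by
      simp only [f, dif_pos hwM]
    have huniq : (hM hwM).exists.choose = v :=
      (hM hwM).unique (hM hwM).exists.choose_spec hadjw.symm
    show ((f ((f v : V)) : V) = v)
    rw [hfv]
    simp only
    rw [hfw]
    exact huniq
  have hCclosed : ∀ s, IsClosed (C s) := by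
    intro s
    have : C s = ⋂ v ∈ s, { f : X | ((f ((f v : V)) : V) = v) } := by
      ext f; simp [C]
    rw [this]
    refine isClosed_biInter fun v _ => ?_
    have heq : { f : X | ((f ((f v : V)) : V) = v) } =
        ⋃ w : G.neighborSet v, ({ f : X | f v = w } ∩ { f : X | ((f (w : V) : V) = v) }) := by
      ext f
      constructor
      · intro hf
        exact Set.mem_iUnion.mpr ⟨f v, rfl, hf⟩
      · rintro hf
        obtain ⟨w, hfw, hfwv⟩ := Set.mem_iUnion.mp hf
        rw [Set.mem_setOf_eq] at hfw
        rw [Set.mem_setOf_eq, hfw]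
        exact hfwv
    rw [heq]
    refine isClosed_iUnion_of_finite fun w => IsClosed.inter ?_ ?_
    · have h1 : { f : X | f v = w } = (fun f : X => f v) ⁻¹' {w} := rfl
      rw [h1]
      exact IsClosed.preimage (continuous_apply v) (isClosed_discrete ({w} : Set (G.neighborSet v)))
    · have h2 : { f : X | ((f (w : V) : V) = v) } =
          (fun f : X => f (w : V)) ⁻¹' {x : G.neighborSet (w : V) | (x : V) = v} := rfl
      rw [h2]
      exact IsClosed.preimage (continuous_apply (w : V))
        (isClosed_discrete {x : G.neighborSet (w : V) | (x : V) = v})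
  haveI : Nonempty (Finset V) := ⟨∅⟩
  have hcpt : ∀ s, IsCompact (C s) := fun s => (hCclosed s).isCompact
  obtain ⟨f, hf⟩ := IsCompact.nonempty_iInter_of_directed_nonempty_isCompact_isClosed
    C hdir hCne hcpt hCclosed
  have hflip : ∀ v : V, ((f ((f v : V)) : V) = v) := by
    intro v
    have := Set.mem_iInter.mp hf {v}
    exact this v (Finset.mem_singleton_self v)
  -- build the perfect matching
  let p : V → V := fun v => (f v : V)
  have hadj : ∀ v, G.Adj v (p v) := fun v => (f v).2
  have hinv : ∀ v, p (p v) = v := hflip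
  refine ⟨{ verts := Set.univ
            Adj := fun a b => p a = b ∨ p b = a
            adj_sub := by
              rintro a b (rfl | h)
              · exact hadj a
              · rw [← h]; exact (hadj b).symm
            edge_vert := fun _ => Set.mem_univ _
            symm := ⟨fun a b h => h.symm⟩ }, ?_, fun v => Set.mem_univ v⟩
  intro v _
  refine ⟨p v, Or.inl rfl, ?_⟩
  rintro w (h | h)
  · exact h.symm
  · calc w = p (p w) := (hinv w).symm
      _ = p v := by rw [h]
end

section
/- Every countable d-regular graph with no odd cycles has a perfect matching. -/
open Set Function SimpleGraph

section Aux

variable {V : Type*} {G : SimpleGraph V}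

lemma aux_path_edge_length : ∀ {x v : V} (p : G.Walk x v),
    p.IsPath → s(v, x) ∈ p.edges → p.length = 1 := by
  intro x v p hp he
  induction p with
  | nil => simp at he
  | @cons a y b h q ih =>
    rw [SimpleGraph.Walk.edges_cons, List.mem_cons] at he
    rcases he with he | he
    · rw [Sym2.eq_iff] at he
      rcases he with ⟨h1, h2⟩ | ⟨h1, h2⟩
      · subst h1; subst h2; exact absurd h (G.irrefl)
      · subst h1
        have hq : q.IsPath := hp.of_cons
        have hnil : (⟨q, hq⟩ : G.Path b b) = SimpleGraph.Path.nil := SimpleGraph.Path.loop_eq _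
        have hqnil : q = SimpleGraph.Walk.nil := congrArg Subtype.val hnil
        subst hqnil
        simp
    · have hx : a ∈ q.support := SimpleGraph.Walk.snd_mem_support_of_mem_edges q he
      rw [SimpleGraph.Walk.cons_isPath_iff] at hp
      exact absurd hx hp.2

lemma aux_exists_closed_split [DecidableEq V] {a b : V} (p : G.Walk a b)
    (h : ¬ p.support.Nodup) :
    ∃ (u : V) (q : G.Walk a u) (c : G.Walk u u) (r : G.Walk u b),
      p = q.append (c.append r) ∧ c.length ≠ 0 := by
  rw [List.nodup_iff_count_le_one] at h
  push_neg at h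
  obtain ⟨u, hu2⟩ := h
  have hu : u ∈ p.support := by
    rw [← List.count_pos_iff]
    omega
  have hsplit := p.take_spec hu
  have hcount : 2 ≤ (p.dropUntil u hu).support.count u := by
    have h1 : ((p.takeUntil u hu).append (p.dropUntil u hu)).support.count u
        = (p.takeUntil u hu).support.count u + (p.dropUntil u hu).support.tail.count u := by
      rw [SimpleGraph.Walk.support_append, List.count_append]
    have h2 : (p.takeUntil u hu).support.count u = 1 := p.count_support_takeUntil_eq_one hu
    have h3 : (p.dropUntil u hu).support.count u
        = (p.dropUntil u hu).support.tail.count u + 1 := by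
      conv_lhs => rw [(p.dropUntil u hu).support_eq_cons]
      rw [List.count_cons_self]
    rw [hsplit] at h1
    omega
  have hnotnil : ¬ (p.dropUntil u hu).Nil := by
    rw [SimpleGraph.Walk.not_nil_iff_lt_length]
    have hle : (p.dropUntil u hu).support.count u ≤ (p.dropUntil u hu).support.length :=
      List.count_le_length
    rw [(p.dropUntil u hu).length_support] at hle
    omega
  obtain ⟨y, h', r1, hr0eq⟩ := (SimpleGraph.Walk.not_nil_iff).mp hnotnil
  have hu1 : u ∈ r1.support := by
    rw [← List.count_pos_iff]
    rw [hr0eq] at hcount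
    rw [SimpleGraph.Walk.support_cons, List.count_cons_self] at hcount
    omega
  refine ⟨u, p.takeUntil u hu, SimpleGraph.Walk.cons h' (r1.takeUntil u hu1),
    r1.dropUntil u hu1, ?_, by simp⟩
  rw [SimpleGraph.Walk.cons_append, r1.take_spec hu1, ← hr0eq, hsplit]

lemma aux_odd_closed [DecidableEq V] :
    ∀ n (v : V) (w : G.Walk v v), w.length = n → Odd n →
      ∃ (u : V) (c : G.Walk u u), c.IsCycle ∧ Odd c.length := by
  intro n
  induction n using Nat.strong_induction_on with
  | _ n ih =>
    intro v w hl hodd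
    cases w with
    | nil =>
      simp only [SimpleGraph.Walk.length_nil] at hl
      subst hl
      exact absurd hodd (by simp)
    | @cons _ x _ h p =>
      by_cases hp : p.support.Nodup
      · by_cases he : s(v, x) ∈ p.edges
        · have h1 : p.length = 1 :=
            aux_path_edge_length p ((SimpleGraph.Walk.isPath_def p).mpr hp) he
          rw [SimpleGraph.Walk.length_cons, h1] at hl
          rw [Nat.odd_iff] at hodd
          omega
        · refine ⟨v, SimpleGraph.Walk.cons h p, ?_, hl ▸ hodd⟩
          rw [SimpleGraph.Walk.cons_isCycle_iff]
          exact ⟨(SimpleGraph.Walk.isPath_def p).mpr hp, he⟩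
      · obtain ⟨u, q, c, r, hpe, hc0⟩ := aux_exists_closed_split p hp
        have hlen : n = q.length + (c.length + r.length) + 1 := by
          rw [← hl, SimpleGraph.Walk.length_cons, hpe]
          simp [SimpleGraph.Walk.length_append]
        have hw2l : (SimpleGraph.Walk.cons h (q.append r)).length
            = q.length + r.length + 1 := by
          simp [SimpleGraph.Walk.length_append]
        rw [Nat.odd_iff] at hodd
        by_cases hoc : Odd c.length
        · exact ih c.length (by omega) u c rfl hoc
        · rw [Nat.odd_iff] at hoc
          push_neg at hoc
          refine ih (SimpleGraph.Walk.cons h (q.append r)).length (by omega) v _ rfl ?_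
          rw [Nat.odd_iff, hw2l]
          omega

end Aux

open Set Function SimpleGraph

section Aux2

lemma aux_csb {α : Type*} {β : Type*} (f : α → β) (g : β → α)
    (hf : Injective f) (hg : Injective g) :
    ∃ h : α → β, Bijective h ∧ ∀ a, h a = f a ∨ g (h a) = a := by
  classical
  cases isEmpty_or_nonempty β with
  | inl hβ =>
    have : IsEmpty α := Function.isEmpty f
    exact ⟨fun a => isEmptyElim a, ⟨fun a => isEmptyElim a, fun b => isEmptyElim b⟩,
      fun a => isEmptyElim a⟩
  | inr hβ =>
    set F : Set α →o Set α :=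
      { toFun := fun s => (g '' (f '' s)ᶜ)ᶜ
        monotone' := fun s t hst =>
          compl_subset_compl.mpr <| image_mono <| compl_subset_compl.mpr <|
            image_mono hst }
    set s : Set α := F.lfp
    have hs : (g '' (f '' s)ᶜ)ᶜ = s := F.map_lfp
    have hns : g '' (f '' s)ᶜ = sᶜ := compl_injective (by simp [hs])
    set g' := invFun g
    have g'g : LeftInverse g' g := leftInverse_invFun hg
    have hg'ns : g' '' sᶜ = (f '' s)ᶜ := by rw [← hns, g'g.image_image]
    set h : α → β := s.piecewise f g' with hh
    have hsurj : Surjective h := by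
      rw [← range_eq_univ, hh, range_piecewise, hg'ns, union_compl_self]
    have hinj : Injective h := by
      refine (injective_piecewise_iff _).2 ⟨hf.injOn, ?_, ?_⟩
      · intro x hx y hy hxy
        obtain ⟨x', _, rfl⟩ : x ∈ g '' (f '' s)ᶜ := by rwa [hns]
        obtain ⟨y', _, rfl⟩ : y ∈ g '' (f '' s)ᶜ := by rwa [hns]
        rw [g'g _, g'g _] at hxy
        rw [hxy]
      · intro x hx y hy hxy
        obtain ⟨y', hy', rfl⟩ : y ∈ g '' (f '' s)ᶜ := by rwa [hns]
        rw [g'g _] at hxy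
        exact hy' ⟨x, hx, hxy⟩
    refine ⟨h, ⟨hinj, hsurj⟩, fun a => ?_⟩
    by_cases ha : a ∈ s
    · left
      simp [hh, Set.piecewise_eq_of_mem _ _ _ ha]
    · right
      obtain ⟨b, _, rfl⟩ : a ∈ g '' (f '' s)ᶜ := by rwa [hns]
      rw [hh, Set.piecewise_eq_of_notMem _ _ _ ha, g'g]

lemma aux_hall_cond {V : Type*} {G : SimpleGraph V} [DecidableEq V] [G.LocallyFinite]
    {d : ℕ} (hd : 1 ≤ d)
    (hreg : G.IsRegularOfDegree d) {ι : Type*} (emb : ι → V) (hemb : Injective emb)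
    (s : Finset ι) :
    s.card ≤ (s.biUnion (fun a => G.neighborFinset (emb a))).card := by
  classical
  set s' : Finset V := s.image emb with hs'
  set N : Finset V := s.biUnion (fun a => G.neighborFinset (emb a)) with hN
  have hcard : s.card = s'.card := (Finset.card_image_of_injective s hemb).symm
  have hmain : s'.card • d ≤ N.card • d := by
    apply Finset.card_nsmul_le_card_nsmul G.Adj
    · intro a ha
      obtain ⟨i, hi, rfl⟩ := Finset.mem_image.mp ha
      have hsub : G.neighborFinset (emb i) ⊆ N.bipartiteAbove G.Adj (emb i) := by
        intro b hb
        rw [Finset.mem_bipartiteAbove]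
        refine ⟨Finset.mem_biUnion.mpr ⟨i, hi, hb⟩, ?_⟩
        exact (SimpleGraph.mem_neighborFinset G (emb i) b).mp hb
      calc d = (G.neighborFinset (emb i)).card := (hreg (emb i)).symm
        _ ≤ _ := Finset.card_le_card hsub
    · intro b _
      have hsub : s'.bipartiteBelow G.Adj b ⊆ G.neighborFinset b := by
        intro a ha
        rw [Finset.mem_bipartiteBelow] at ha
        exact (SimpleGraph.mem_neighborFinset G b a).mpr ha.2.symm
      calc (s'.bipartiteBelow G.Adj b).card ≤ (G.neighborFinset b).card :=
            Finset.card_le_card hsub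
        _ = d := hreg b
  rw [hcard]
  simp only [smul_eq_mul] at hmain
  exact Nat.le_of_mul_le_mul_right hmain (by omega)

end Aux2

open Set Function SimpleGraph

/-- Every countable `d`-regular graph with no odd cycles has a perfect
matching. -/
theorem regular_no_odd_cycle_perfect_matching {V : Type*} [Countable V]
    (G : SimpleGraph V) [G.LocallyFinite] (d : ℕ) (hd : 1 ≤ d)
    (hreg : G.IsRegularOfDegree d)
    (hbip : ¬ ∃ (v : V) (w : G.Walk v v), w.IsCycle ∧ Odd w.length) :
    ∃ M : G.Subgraph, M.IsPerfectMatching := by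
  classical
  have heven : ∀ (v : V) (w : G.Walk v v), Even w.length := by
    intro v w
    by_contra hodd
    rw [Nat.not_even_iff_odd] at hodd
    obtain ⟨u, c, hc, hoc⟩ := aux_odd_closed w.length v w rfl hodd
    exact hbip ⟨u, c, hc, hoc⟩
  set rep : V → V := fun v => (G.connectedComponentMk v).out with hrep
  have hre : ∀ v, G.Reachable (rep v) v := fun v =>
    SimpleGraph.ConnectedComponent.exact ((G.connectedComponentMk v).out_eq)
  set col : V → Prop := fun v => Odd ((hre v).some.length) with hcol
  have hkey : ∀ a b : V, G.Adj a b → (col a ↔ ¬ col b) := by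
    intro a b hab
    have hrepeq : rep a = rep b := by
      simp only [hrep]
      rw [SimpleGraph.ConnectedComponent.sound hab.reachable]
    have hclosed : Even (((hre a).some).append (SimpleGraph.Walk.cons hab
        (((hre b).some.copy hrepeq.symm rfl).reverse))).length := heven _ _
    rw [SimpleGraph.Walk.length_append, SimpleGraph.Walk.length_cons,
      SimpleGraph.Walk.length_reverse, SimpleGraph.Walk.length_copy] at hclosed
    rw [Nat.even_iff] at hclosed
    simp only [hcol, Nat.odd_iff]
    omega
  have hallA := (Finset.all_card_le_biUnion_card_iff_exists_injective
    (fun a : {v : V // ¬ col v} => G.neighborFinset a.1)).mp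
    (fun s => aux_hall_cond hd hreg _ Subtype.val_injective s)
  have hallB := (Finset.all_card_le_biUnion_card_iff_exists_injective
    (fun b : {v : V // col v} => G.neighborFinset b.1)).mp
    (fun s => aux_hall_cond hd hreg _ Subtype.val_injective s)
  obtain ⟨f0, hf0inj, hf0⟩ := hallA
  obtain ⟨g0, hg0inj, hg0⟩ := hallB
  have hf0adj : ∀ a, G.Adj a.1 (f0 a) := fun a =>
    (SimpleGraph.mem_neighborFinset G a.1 (f0 a)).mp (hf0 a)
  have hg0adj : ∀ b, G.Adj b.1 (g0 b) := fun b =>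
    (SimpleGraph.mem_neighborFinset G b.1 (g0 b)).mp (hg0 b)
  set f : {v : V // ¬ col v} → {v : V // col v} :=
    fun a => ⟨f0 a, by
      have h1 := hkey a.1 (f0 a) (hf0adj a)
      have h2 := a.2
      tauto⟩ with hf
  set g : {v : V // col v} → {v : V // ¬ col v} :=
    fun b => ⟨g0 b, by
      have h1 := hkey (g0 b) b.1 (hg0adj b).symm
      have h2 := b.2
      tauto⟩ with hg
  have hfinj : Injective f := fun x y hxy => hf0inj (congrArg Subtype.val hxy)
  have hginj : Injective g := fun x y hxy => hg0inj (congrArg Subtype.val hxy)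
  obtain ⟨h, hbij, hprop⟩ := aux_csb f g hfinj hginj
  set sA : Set V := {v | ¬ col v} with hsA
  set sB : Set V := {v | col v} with hsB
  have hdisj : Disjoint sA sB := by
    rw [Set.disjoint_left]
    intro v hv hv'
    exact hv hv'
  have hadj : ∀ v : sA, G.Adj v ((Equiv.ofBijective h hbij) v) := by
    intro v
    rw [Equiv.ofBijective_apply]
    rcases hprop v with h1 | h1
    · rw [h1]
      simp only [hf]
      exact hf0adj v
    · have h2 : g0 (h v) = (v : V) := by
        have := congrArg Subtype.val h1
        simpa [hg] using this
      have h3 := hg0adj (h v)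
      rw [h2] at h3
      exact h3.symm
  obtain ⟨M, hMv, hM⟩ := SimpleGraph.Subgraph.IsMatching.exists_of_disjoint_sets_of_equiv
    hdisj (Equiv.ofBijective h hbij) hadj
  refine ⟨M, hM, ?_⟩
  rw [SimpleGraph.Subgraph.isSpanning_iff, hMv]
  ext v
  simp only [Set.mem_union, hsA, hsB, Set.mem_setOf_eq, Set.mem_univ, iff_true]
  tauto
end
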